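/- Let Ψ be a root datum with a finite group Γ of automorphisms stabilizing a base Δ. Let i* : X* → X̄* be the projection to coinvariants modulo torsion, and let Φ̄ = i*(Φ). Then for every α ∈ Φ̄, the preimage (i*)^{-1}(α) ∩ Φ is a single Γ-orbit of roots in Φ. -/

import Mathlib

open scoped BigOperators Classical

/-- The multiplicative group structure on `AddAut A` (composition, `e₁ * e₂ = e₂.trans e₁`),
which Mathlib used to provide and now replaces by an additive one. -/
instance AddAut.group (A : Type*) [Add A] : Group (AddAut A) :=
  inferInstanceAs (Group (Multiplicative (AddAut A)))

/-- A (not necessarily reduced) root datum `Ψ = (X*, Φ, X_*, Φ^∨)`: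
dual lattices `X`, `Y` in perfect duality, a finite set of roots, and a
coroot map satisfying the usual axioms. -/
structure ZRootDatum (X Y : Type) [AddCommGroup X] [AddCommGroup Y] : Type where
  pair : X →+ Y →+ ℤ
  perfect : Function.Bijective fun x : X => pair x
  perfect' : Function.Bijective fun y : Y => pair.flip y
  roots : Finset X
  coroot : X → Y
  pair_self : ∀ β ∈ roots, pair β (coroot β) = 2
  reflect_mem : ∀ β ∈ roots, ∀ x ∈ roots, x - pair x (coroot β) • β ∈ roots
  coreflect_mem : ∀ β ∈ roots, ∀ β' ∈ roots,
    ∃ β'' ∈ roots, coroot β' - pair β (coroot β') • coroot β = coroot β''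

variable {X Y Γ : Type} [AddCommGroup X] [AddCommGroup Y] [Group Γ]

/-- The Weyl group of a root datum: the subgroup of `Aut(X)` generated by the
reflections `w_β : x ↦ x - ⟨x, β^∨⟩β` through the roots. -/
def ZRootDatum.weylGroup (Ψ : ZRootDatum X Y) : Subgroup (AddAut X) :=
  Subgroup.closure {w : AddAut X | ∃ β ∈ Ψ.roots, ∀ x, w x = x - Ψ.pair x (Ψ.coroot β) • β}

/-- `Δ` is a base (system of simple roots) of the root datum. -/
def ZRootDatum.IsBase (Ψ : ZRootDatum X Y) (Δ : Finset X) : Prop :=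
  (↑Δ : Set X) ⊆ ↑Ψ.roots ∧
  LinearIndependent ℤ (fun a : ↥(↑Δ : Set X) => (a : X)) ∧
  ∀ β ∈ Ψ.roots, ∃ c : X → ℤ,
    β = ∑ a ∈ Δ, c a • a ∧ ((∀ a ∈ Δ, 0 ≤ c a) ∨ (∀ a ∈ Δ, c a ≤ 0))

/-- A group `Γ` acting (via `ρ` on `X*` and `ρ'` on `X_*`) by automorphisms of
the root datum `Ψ`. -/
structure RDAction (Ψ : ZRootDatum X Y) (ρ : Γ →* AddAut X) (ρ' : Γ →* AddAut Y) : Prop where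
  pair_eq : ∀ γ x y, Ψ.pair (ρ γ x) (ρ' γ y) = Ψ.pair x y
  root_mem : ∀ γ, ∀ β ∈ Ψ.roots, ρ γ β ∈ Ψ.roots
  coroot_eq : ∀ γ, ∀ β ∈ Ψ.roots, Ψ.coroot (ρ γ β) = ρ' γ (Ψ.coroot β)

/-- The norm map `N : x ↦ ∑_{γ ∈ Γ} γ·x`.  For a free lattice `X`, its kernel
is exactly the kernel of the projection of `X` onto the coinvariants `X_Γ`
modulo torsion. -/
noncomputable def normMap [Fintype Γ] (ρ : Γ →* AddAut X) : X →+ X :=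
  ∑ γ : Γ, ((ρ γ : X ≃+ X) : X →+ X)

/-- The projection `i* : X* → X̄*` onto the coinvariant lattice modulo torsion. -/
noncomputable def istar [Fintype Γ] (ρ : Γ →* AddAut X) : X →+ X ⧸ (normMap ρ).ker :=
  QuotientAddGroup.mk' (normMap ρ).ker


namespace ZRootDatum

lemma pair_eq_zero_iff (Ψ : ZRootDatum X Y) {x : X} : (∀ y, Ψ.pair x y = 0) ↔ x = 0 := by
  constructor
  · intro h
    have : Ψ.pair x = Ψ.pair 0 := by ext y; simp [h y]
    exact Ψ.perfect.injective this
  · rintro rfl; simp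

lemma smul_cancel (Ψ : ZRootDatum X Y) {n : ℤ} {x : X} (hn : n ≠ 0) (h : n • x = 0) : x = 0 := by
  rw [← Ψ.pair_eq_zero_iff]
  intro y
  have h2 : Ψ.pair (n • x) y = 0 := by rw [h]; simp
  rw [map_zsmul] at h2
  simp only [AddMonoidHom.smul_apply, smul_eq_mul, mul_eq_zero] at h2
  tauto

lemma root_ne_zero (Ψ : ZRootDatum X Y) {δ : X} (hδ : δ ∈ Ψ.roots) : δ ≠ 0 := by
  intro h
  have := Ψ.pair_self δ hδ
  rw [h] at this
  simp at this

lemma neg_mem (Ψ : ZRootDatum X Y) {δ : X} (hδ : δ ∈ Ψ.roots) : -δ ∈ Ψ.roots := by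
  have := Ψ.reflect_mem δ hδ δ hδ
  rwa [Ψ.pair_self δ hδ, show δ - (2:ℤ) • δ = -δ by module] at this

lemma not_forall_mem (Ψ : ZRootDatum X Y) (v d : X) (hd : d ≠ 0)
    (h : ∀ n : ℕ, v + n • d ∈ Ψ.roots) : False := by
  have hinj : Function.Injective (fun n : ℕ => v + n • d) := by
    intro m n hmn
    simp only [add_right_inj] at hmn
    by_contra hne
    have h1 : ((m : ℤ) - (n : ℤ)) • d = 0 := by
      rw [sub_smul, natCast_zsmul, natCast_zsmul, hmn, sub_self]
    exact hd (Ψ.smul_cancel (sub_ne_zero.mpr (by exact_mod_cast hne)) h1)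
  exact Set.not_infinite.mpr Ψ.roots.finite_toSet
    (Set.infinite_of_injective_forall_mem hinj fun n => h n)

lemma eq_of_orbit (Ψ : ZRootDatum X Y) {u v : X} (hv : v ∈ Ψ.roots)
    (hp : Ψ.pair u (Ψ.coroot v) = 2)
    (hg : ∀ x ∈ Ψ.roots, x + (Ψ.pair x (Ψ.coroot v)) • (u - v) ∈ Ψ.roots) :
    u = v := by
  by_contra hne
  have hd : (2:ℤ) • (u - v) ≠ 0 := fun h =>
    hne (by simpa [sub_eq_zero] using Ψ.smul_cancel two_ne_zero h)
  apply Ψ.not_forall_mem v ((2:ℤ) • (u - v)) hd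
  intro n
  induction n with
  | zero => simpa using hv
  | succ n ih =>
    have h0 : Ψ.pair ((2:ℤ) • (u - v)) (Ψ.coroot v) = 0 := by
      simp [map_zsmul, map_sub, hp, Ψ.pair_self v hv]
    have hpair : Ψ.pair (v + n • (2:ℤ) • (u - v)) (Ψ.coroot v) = 2 := by
      simp only [map_add, map_nsmul, AddMonoidHom.add_apply, AddMonoidHom.smul_apply,
        h0, smul_zero, add_zero, Ψ.pair_self v hv]
    have := hg _ ih
    rw [hpair] at this
    convert this using 1
    rw [succ_nsmul]
    module
end ZRootDatum
namespace ZRootDatum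

lemma coroot_inj (Ψ : ZRootDatum X Y) {β β' : X} (hβ : β ∈ Ψ.roots) (hβ' : β' ∈ Ψ.roots)
    (h : Ψ.coroot β = Ψ.coroot β') : β = β' := by
  apply Ψ.eq_of_orbit hβ'
  · rw [← h]; exact Ψ.pair_self β hβ
  · intro x hx
    have e : x + Ψ.pair x (Ψ.coroot β') • (β - β') =
        (x - Ψ.pair x (Ψ.coroot β') • β') -
          Ψ.pair (x - Ψ.pair x (Ψ.coroot β') • β') (Ψ.coroot β) • β := by
      rw [h]
      simp only [map_sub, map_zsmul, AddMonoidHom.sub_apply, AddMonoidHom.smul_apply,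
        Ψ.pair_self β' hβ', smul_eq_mul]
      module
    rw [e]
    exact Ψ.reflect_mem β hβ _ (Ψ.reflect_mem β' hβ' x hx)

lemma coroot_reflect (Ψ : ZRootDatum X Y) {β β' : X} (hβ : β ∈ Ψ.roots) (hβ' : β' ∈ Ψ.roots) :
    Ψ.coroot (β' - Ψ.pair β' (Ψ.coroot β) • β)
      = Ψ.coroot β' - Ψ.pair β (Ψ.coroot β') • Ψ.coroot β := by
  obtain ⟨β'', hβ''r, hco⟩ := Ψ.coreflect_mem β hβ β' hβ'
  set p := Ψ.pair β' (Ψ.coroot β) with hpdef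
  set q := Ψ.pair β (Ψ.coroot β') with hqdef
  set u := β' - p • β with hu
  have hur : u ∈ Ψ.roots := Ψ.reflect_mem β hβ β' hβ'
  suffices hsuff : u = β'' by rw [← hsuff] at hco; rw [hco]
  -- pairing against the new coroot
  have hpairco : ∀ z : X, Ψ.pair z (Ψ.coroot β'') =
      Ψ.pair z (Ψ.coroot β') - q * Ψ.pair z (Ψ.coroot β) := by
    intro z
    rw [← hco, map_sub, map_zsmul, smul_eq_mul]
  have hr : Ψ.pair β'' (Ψ.coroot β') = 2 + q * Ψ.pair β'' (Ψ.coroot β) := by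
    have h2 := Ψ.pair_self β'' hβ''r
    rw [hpairco β''] at h2
    linarith
  apply Ψ.eq_of_orbit hβ''r
  · rw [hpairco u, hu]
    simp only [map_sub, map_zsmul, AddMonoidHom.sub_apply, AddMonoidHom.smul_apply,
      Ψ.pair_self β hβ, Ψ.pair_self β' hβ', smul_eq_mul, ← hpdef, ← hqdef]
    ring
  · intro x hx
    have e : x + Ψ.pair x (Ψ.coroot β'') • (u - β'') =
        (fun z => z - Ψ.pair z (Ψ.coroot β) • β)
        ((fun z => z - Ψ.pair z (Ψ.coroot β') • β')
        ((fun z => z - Ψ.pair z (Ψ.coroot β) • β)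
        (x - Ψ.pair x (Ψ.coroot β'') • β''))) := by
      simp only [hpairco, hu, map_sub, map_zsmul, AddMonoidHom.sub_apply,
        AddMonoidHom.smul_apply, Ψ.pair_self β hβ, Ψ.pair_self β' hβ',
        smul_eq_mul, ← hpdef, ← hqdef]
      rw [hr]
      match_scalars <;> ring
    rw [e]
    exact Ψ.reflect_mem β hβ _ (Ψ.reflect_mem β' hβ' _ (Ψ.reflect_mem β hβ _
      (Ψ.reflect_mem β'' hβ''r x hx)))
end ZRootDatum
namespace ZRootDatum

/-- The pairing as a bilinear map over `ℤ`. -/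
noncomputable def pairL (Ψ : ZRootDatum X Y) : X →ₗ[ℤ] Y →ₗ[ℤ] ℤ where
  toFun x := (Ψ.pair x).toIntLinearMap
  map_add' x z := by ext y; simp
  map_smul' n x := by ext y; simp

@[simp] lemma pairL_apply (Ψ : ZRootDatum X Y) (x : X) (y : Y) :
    Ψ.pairL x y = Ψ.pair x y := rfl

/-- The perfect pairing attached to a `ZRootDatum`. -/
lemma toPerfect (Ψ : ZRootDatum X Y) : Ψ.pairL.IsPerfPair where
  bijective_left := by
    have h : ⇑Ψ.pairL = ⇑(addMonoidHomLequivInt (A := Y) (B := ℤ) ℤ) ∘ (fun x => Ψ.pair x) := rfl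
    rw [h]
    exact (addMonoidHomLequivInt ℤ).bijective.comp Ψ.perfect
  bijective_right := by
    have h : ⇑Ψ.pairL.flip =
        ⇑(addMonoidHomLequivInt (A := X) (B := ℤ) ℤ) ∘ (fun y => Ψ.pair.flip y) := by
      funext y; ext x; rfl
    rw [h]
    exact (addMonoidHomLequivInt ℤ).bijective.comp Ψ.perfect'

/-- The root pairing attached to a `ZRootDatum`. -/
noncomputable def toRootPairing (Ψ : ZRootDatum X Y) :
    RootPairing {β // β ∈ Ψ.roots} ℤ X Y where
  toLinearMap := Ψ.pairL
  isPerfPair_toLinearMap := Ψ.toPerfect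
  root := ⟨Subtype.val, Subtype.val_injective⟩
  coroot := ⟨fun i => Ψ.coroot i, fun i j hij => Subtype.ext (Ψ.coroot_inj i.2 j.2 hij)⟩
  root_coroot_two i := Ψ.pair_self i i.2
  reflectionPerm i := Equiv.ofBijective
    (fun j => (⟨j.1 - Ψ.pair j (Ψ.coroot i) • i.1, Ψ.reflect_mem i i.2 j j.2⟩ :
        {β // β ∈ Ψ.roots}))
    (Finite.injective_iff_bijective.mp (by
      intro j k hjk
      apply Subtype.ext
      have h : ∀ z : X, (z - Ψ.pair z (Ψ.coroot i) • i.1) -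
          Ψ.pair (z - Ψ.pair z (Ψ.coroot i) • i.1) (Ψ.coroot i) • i.1 = z := by
        intro z
        simp only [map_sub, map_zsmul, AddMonoidHom.sub_apply, AddMonoidHom.smul_apply,
          Ψ.pair_self i i.2, smul_eq_mul]
        module
      have := congrArg (fun z : {β // β ∈ Ψ.roots} =>
        z.1 - Ψ.pair z.1 (Ψ.coroot i) • i.1) hjk
      simpa only [h] using this))
  reflectionPerm_root i j := rfl
  reflectionPerm_coroot i j := by
    exact (Ψ.coroot_reflect i.2 j.2).symm

end ZRootDatum
namespace ZRootDatum

lemma rootForm_eq (Ψ : ZRootDatum X Y) (x y : X) :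
    Ψ.toRootPairing.RootForm x y =
      ∑ i : {β // β ∈ Ψ.roots}, Ψ.pair x (Ψ.coroot i) * Ψ.pair y (Ψ.coroot i) := by
  rw [RootPairing.rootForm_apply_apply]
  rfl

lemma rootForm_comm (Ψ : ZRootDatum X Y) (x y : X) :
    Ψ.toRootPairing.RootForm x y = Ψ.toRootPairing.RootForm y x := by
  rw [rootForm_eq, rootForm_eq]
  exact Finset.sum_congr rfl fun i _ => mul_comm _ _

lemma rootForm_sub_sub (Ψ : ZRootDatum X Y) (a b : ℤ) (x y : X) :
    Ψ.toRootPairing.RootForm (a • x - b • y) (a • x - b • y) =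
      a * a * Ψ.toRootPairing.RootForm x x - a * b * Ψ.toRootPairing.RootForm x y
        - b * a * Ψ.toRootPairing.RootForm y x + b * b * Ψ.toRootPairing.RootForm y y := by
  simp only [map_sub, map_smul, LinearMap.sub_apply, LinearMap.smul_apply, smul_eq_mul]
  ring

lemma rootForm_pair_eq (Ψ : ZRootDatum X Y) (i : {β // β ∈ Ψ.roots}) (x : X) :
    Ψ.toRootPairing.RootForm i.1 i.1 * Ψ.pair x (Ψ.coroot i) =
      2 * Ψ.toRootPairing.RootForm x i.1 := by
  have h := congrArg (fun y => Ψ.pair x y)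
    (RootPairing.rootForm_self_smul_coroot Ψ.toRootPairing i)
  simp only [map_zsmul, map_nsmul, RootPairing.Polarization_apply, map_sum,
    AddMonoidHom.smul_apply, smul_eq_mul] at h
  calc Ψ.toRootPairing.RootForm i.1 i.1 * Ψ.pair x (Ψ.coroot i) = _ := h
    _ = 2 * Ψ.toRootPairing.RootForm x i.1 := by
        rw [nsmul_eq_mul, Nat.cast_ofNat, rootForm_eq, Finset.mul_sum, Finset.mul_sum]
        refine Finset.sum_congr rfl fun j _ => ?_
        show (2:ℤ) * ((Ψ.pair i.1) (Ψ.coroot j) * (Ψ.pair x) (Ψ.coroot j)) =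
          2 * ((Ψ.pair x) (Ψ.coroot j) * (Ψ.pair i.1) (Ψ.coroot j))
        ring

end ZRootDatum
namespace ZRootDatum

lemma root_self_pos (Ψ : ZRootDatum X Y) (i : {β // β ∈ Ψ.roots}) :
    0 < Ψ.toRootPairing.RootForm i.1 i.1 :=
  Ψ.toRootPairing.rootForm_pos_of_ne_zero (Submodule.subset_span ⟨i, rfl⟩) (Ψ.root_ne_zero i.2)

lemma mem_rootSpan (Ψ : ZRootDatum X Y) {δ : X} (hδ : δ ∈ Ψ.roots) :
    δ ∈ Ψ.toRootPairing.rootSpan ℤ :=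
  Submodule.subset_span ⟨⟨δ, hδ⟩, rfl⟩

lemma sub_mem_or_eq (Ψ : ZRootDatum X Y) {δ β' : X} (hδ : δ ∈ Ψ.roots) (hβ' : β' ∈ Ψ.roots)
    (hBpos : 0 < Ψ.toRootPairing.RootForm δ β') : δ = β' ∨ β' - δ ∈ Ψ.roots := by
  set p := Ψ.pair δ (Ψ.coroot β') with hp
  set q := Ψ.pair β' (Ψ.coroot δ) with hq
  have hApos : 0 < Ψ.toRootPairing.RootForm δ δ := Ψ.root_self_pos ⟨δ, hδ⟩
  have hCpos : 0 < Ψ.toRootPairing.RootForm β' β' := Ψ.root_self_pos ⟨β', hβ'⟩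
  set A := Ψ.toRootPairing.RootForm δ δ with hA
  set C := Ψ.toRootPairing.RootForm β' β' with hC
  set D := Ψ.toRootPairing.RootForm δ β' with hD
  have hsymm : Ψ.toRootPairing.RootForm β' δ = D := (Ψ.rootForm_comm δ β').symm
  have hqA : A * q = 2 * D := by
    have h1 := Ψ.rootForm_pair_eq ⟨δ, hδ⟩ β'
    rwa [hsymm] at h1
  have hpC : C * p = 2 * D := Ψ.rootForm_pair_eq ⟨β', hβ'⟩ δ
  have hq1 : 1 ≤ q := by nlinarith
  have hp1 : 1 ≤ p := by nlinarith
  rcases eq_or_lt_of_le hq1 with hq2 | hq2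
  · right
    have h2 := Ψ.reflect_mem δ hδ β' hβ'
    rwa [← hq, ← hq2, one_smul] at h2
  rcases eq_or_lt_of_le hp1 with hp2 | hp2
  · right
    have h1 := Ψ.reflect_mem β' hβ' δ hδ
    rw [← hp, ← hp2, one_smul] at h1
    have h2 := Ψ.neg_mem h1
    rwa [neg_sub] at h2
  -- now p ≥ 2, q ≥ 2
  left
  have hexp : Ψ.toRootPairing.RootForm (C • δ - D • β') (C • δ - D • β') =
      C * (A * C - D * D) := by
    rw [Ψ.rootForm_sub_sub, hsymm, ← hA, ← hC, ← hD]
    ring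
  have hCS : D * D ≤ A * C := by
    have hself : 0 ≤ Ψ.toRootPairing.RootForm (C • δ - D • β') (C • δ - D • β') :=
      Ψ.toRootPairing.zero_le_rootForm _
    nlinarith
  have h4 : (A * q) * (C * p) = (2 * D) * (2 * D) := by rw [hqA, hpC]
  have hqp : 4 ≤ q * p := by nlinarith
  have h5 : A * C * 4 ≤ A * C * (q * p) :=
    mul_le_mul_of_nonneg_left hqp (le_of_lt (mul_pos hApos hCpos))
  have h6 : A * C * (q * p) = 4 * (D * D) := by linear_combination h4
  have hACD : A * C = D * D := by linarith
  have ht0 : Ψ.toRootPairing.RootForm (C • δ - D • β') (C • δ - D • β') = 0 := by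
    rw [hexp, hACD]; ring
  have hmem : C • δ - D • β' ∈ Ψ.toRootPairing.rootSpan ℤ :=
    Submodule.sub_mem _ (Submodule.smul_mem _ _ (Ψ.mem_rootSpan hδ))
      (Submodule.smul_mem _ _ (Ψ.mem_rootSpan hβ'))
  have htz : C • δ - D • β' = 0 :=
    Ψ.toRootPairing.eq_zero_of_mem_rootSpan_of_rootForm_self_eq_zero hmem ht0
  have hCD : C = D := by nlinarith
  have hz : C • (δ - β') = 0 := by
    rw [smul_sub]
    rw [hCD] at htz ⊢
    exact htz
  exact sub_eq_zero.mp (Ψ.smul_cancel (ne_of_gt hCpos) hz)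

end ZRootDatum
section NormLemmas

variable [Fintype Γ]

lemma norm_apply (ρ : Γ →* AddAut X) (x : X) : normMap ρ x = ∑ γ : Γ, ρ γ x := by
  rw [normMap, AddMonoidHom.finset_sum_apply]
  simp

lemma norm_comp_right (ρ : Γ →* AddAut X) (γ : Γ) (x : X) :
    normMap ρ (ρ γ x) = normMap ρ x := by
  rw [norm_apply, norm_apply]
  refine Fintype.sum_equiv (Equiv.mulRight γ) _ _ fun σ => ?_
  rw [Equiv.coe_mulRight, map_mul]
  rfl

lemma norm_comp_left (ρ : Γ →* AddAut X) (γ : Γ) (x : X) :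
    ρ γ (normMap ρ x) = normMap ρ x := by
  rw [norm_apply, map_sum]
  refine Fintype.sum_equiv (Equiv.mulLeft γ) _ _ fun σ => ?_
  rw [Equiv.coe_mulLeft, map_mul]
  rfl

lemma istar_eq_iff (ρ : Γ →* AddAut X) (x y : X) :
    istar ρ x = istar ρ y ↔ normMap ρ x = normMap ρ y := by
  constructor
  · intro h
    obtain ⟨z, hz, hxz⟩ := (QuotientAddGroup.mk'_eq_mk' (N := (normMap ρ).ker)).mp h
    have hz0 := AddMonoidHom.mem_ker.mp hz
    calc normMap ρ x = normMap ρ x + normMap ρ z := by rw [hz0, add_zero]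
      _ = normMap ρ y := by rw [← map_add, hxz]
  · intro h
    apply (QuotientAddGroup.mk'_eq_mk' (N := (normMap ρ).ker)).mpr
    refine ⟨y - x, ?_, by abel⟩
    rw [AddMonoidHom.mem_ker, map_sub, h, sub_self]

lemma rootForm_invariant (Ψ : ZRootDatum X Y) (ρ : Γ →* AddAut X) (ρ' : Γ →* AddAut Y)
    (hact : RDAction Ψ ρ ρ') (γ : Γ) (x y : X) :
    Ψ.toRootPairing.RootForm (ρ γ x) (ρ γ y) = Ψ.toRootPairing.RootForm x y := by
  rw [Ψ.rootForm_eq, Ψ.rootForm_eq]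
  have hinj : Function.Injective (fun i : {β // β ∈ Ψ.roots} =>
      (⟨ρ γ i, hact.root_mem γ i i.2⟩ : {β // β ∈ Ψ.roots})) := by
    intro i j hij
    exact Subtype.ext ((ρ γ).injective (congrArg Subtype.val hij))
  refine (Fintype.sum_equiv (Equiv.ofBijective _ (Finite.injective_iff_bijective.mp hinj))
    (fun i => Ψ.pair x (Ψ.coroot i) * Ψ.pair y (Ψ.coroot i))
    (fun i => Ψ.pair (ρ γ x) (Ψ.coroot i) * Ψ.pair (ρ γ y) (Ψ.coroot i)) fun i => ?_).symm
  show Ψ.pair x (Ψ.coroot i) * Ψ.pair y (Ψ.coroot i) =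
    Ψ.pair (ρ γ x) (Ψ.coroot (ρ γ i)) * Ψ.pair (ρ γ y) (Ψ.coroot (ρ γ i))
  rw [hact.coroot_eq γ i i.2, hact.pair_eq, hact.pair_eq]

end NormLemmas
section NormRoot

variable [Fintype Γ]

lemma rho_inv_apply (ρ : Γ →* AddAut X) (γ : Γ) (x : X) : ρ γ⁻¹ (ρ γ x) = x := by
  rw [map_inv]
  exact (ρ γ).symm_apply_apply x

lemma norm_root_ne_zero (Ψ : ZRootDatum X Y) (ρ : Γ →* AddAut X)
    (Δ : Finset X) (hΔ : Ψ.IsBase Δ) (hstab : ∀ γ : Γ, ∀ a ∈ Δ, ρ γ a ∈ Δ)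
    {δ : X} (hδ : δ ∈ Ψ.roots) : normMap ρ δ ≠ 0 := by
  obtain ⟨c, hdec, hsign⟩ := hΔ.2.2 δ hδ
  intro h0
  have hreind : ∀ γ : Γ, ∀ f : X → ℤ, ∑ a ∈ Δ, f a = ∑ b ∈ Δ, f (ρ γ⁻¹ b) := by
    intro γ f
    refine Finset.sum_nbij' (fun a => ρ γ a) (fun b => ρ γ⁻¹ b)
      (fun a ha => hstab γ a ha) (fun b hb => hstab γ⁻¹ b hb)
      (fun a _ => rho_inv_apply ρ γ a)
      (fun b _ => by simpa using rho_inv_apply ρ γ⁻¹ b)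
      (fun a _ => by rw [rho_inv_apply])
  have key : normMap ρ δ = ∑ b ∈ Δ, (∑ γ : Γ, c (ρ γ⁻¹ b)) • b := by
    rw [norm_apply]
    calc ∑ γ : Γ, ρ γ δ = ∑ γ : Γ, ∑ b ∈ Δ, c (ρ γ⁻¹ b) • b := by
          refine Finset.sum_congr rfl fun γ _ => ?_
          rw [hdec, map_sum]
          simp_rw [map_zsmul]
          exact Finset.sum_nbij' (fun a => ρ γ a) (fun b => ρ γ⁻¹ b)
            (fun a ha => hstab γ a ha) (fun b hb => hstab γ⁻¹ b hb)
            (fun a _ => rho_inv_apply ρ γ a)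
            (fun b _ => by simpa using rho_inv_apply ρ γ⁻¹ b)
            (fun a _ => by rw [rho_inv_apply])
      _ = ∑ b ∈ Δ, (∑ γ : Γ, c (ρ γ⁻¹ b)) • b := by
          rw [Finset.sum_comm]
          exact Finset.sum_congr rfl fun b _ => (Finset.sum_smul).symm
  -- linear independence kills each coefficient
  have hzero : ∀ b ∈ Δ, (∑ γ : Γ, c (ρ γ⁻¹ b)) = 0 := by
    have hsum0 : ∑ a : (↑Δ : Set X), (∑ γ : Γ, c (ρ γ⁻¹ a.1)) • a.1 = 0 := by
      rw [← Finset.sum_subtype (p := fun x => x ∈ (↑Δ : Set X)) Δ (fun x => by simp)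
        (fun b => (∑ γ : Γ, c (ρ γ⁻¹ b)) • b)]
      rw [← key]
      exact h0
    intro b hb
    exact linearIndependent_iff'.mp hΔ.2.1 Finset.univ
      (fun a => ∑ γ : Γ, c (ρ γ⁻¹ a.1)) (by simpa using hsum0) ⟨b, hb⟩ (Finset.mem_univ _)
  -- hence the total coefficient sum vanishes
  have htot : (Fintype.card Γ : ℤ) * ∑ a ∈ Δ, c a = 0 := by
    have h1 : ∑ b ∈ Δ, ∑ γ : Γ, c (ρ γ⁻¹ b) = 0 :=
      Finset.sum_eq_zero hzero
    rw [Finset.sum_comm] at h1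
    have h2 : ∀ γ : Γ, ∑ b ∈ Δ, c (ρ γ⁻¹ b) = ∑ a ∈ Δ, c a :=
      fun γ => (hreind γ c).symm
    rw [Finset.sum_congr rfl (fun γ _ => h2 γ)] at h1
    rwa [Finset.sum_const, Finset.card_univ, nsmul_eq_mul] at h1
  have hcsum : ∑ a ∈ Δ, c a = 0 := by
    have : (Fintype.card Γ : ℤ) ≠ 0 := by
      simp [Fintype.card_ne_zero]
    exact (mul_eq_zero.mp htot).resolve_left this
  have hcall : ∀ a ∈ Δ, c a = 0 := by
    rcases hsign with hs | hs
    · exact (Finset.sum_eq_zero_iff_of_nonneg hs).mp hcsum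
    · exact (Finset.sum_eq_zero_iff_of_nonpos hs).mp hcsum
  have : δ = 0 := by
    rw [hdec]
    exact Finset.sum_eq_zero fun a ha => by rw [hcall a ha, zero_smul]
  exact Ψ.root_ne_zero hδ this

end NormRoot

/-- Let `Ψ` be a root datum with a finite group `Γ` of
automorphisms stabilizing a base `Δ`, and `i*` the projection to coinvariants
modulo torsion.  Then for every `α ∈ Φ̄ = i*(Φ)`, the fiber `(i*)⁻¹(α) ∩ Φ` is a
single `Γ`-orbit of roots: for `β ∈ Φ` with `i*β = α`, a root `β'` satisfies
`i*β' = α` iff `β'` lies in the `Γ`-orbit of `β`. -/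
theorem istar_fiber_is_orbit
    [Fintype Γ] [Module.Free ℤ X] [Module.Finite ℤ X]
    (Ψ : ZRootDatum X Y) (ρ : Γ →* AddAut X) (ρ' : Γ →* AddAut Y)
    (hact : RDAction Ψ ρ ρ') (Δ : Finset X) (hΔ : Ψ.IsBase Δ)
    (hstab : ∀ γ : Γ, ∀ a ∈ Δ, ρ γ a ∈ Δ)
    (β : X) (hβ : β ∈ Ψ.roots) (β' : X) :
    (β' ∈ Ψ.roots ∧ istar ρ β' = istar ρ β) ↔ ∃ γ : Γ, ρ γ β = β' := by
  constructor
  · rintro ⟨hβ'r, hi⟩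
    have hN : normMap ρ β' = normMap ρ β := (istar_eq_iff ρ β' β).mp hi
    have hNmem : normMap ρ β ∈ Ψ.toRootPairing.rootSpan ℤ := by
      rw [norm_apply]
      exact Submodule.sum_mem _ fun γ _ => Ψ.mem_rootSpan (hact.root_mem γ β hβ)
    have hNne : normMap ρ β ≠ 0 := norm_root_ne_zero Ψ ρ Δ hΔ hstab hβ
    have hpos : 0 < Ψ.toRootPairing.RootForm (normMap ρ β) (normMap ρ β) :=
      Ψ.toRootPairing.rootForm_pos_of_ne_zero hNmem hNne
    have hterm : ∀ γ : Γ, Ψ.toRootPairing.RootForm (normMap ρ β) (ρ γ β') =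
        Ψ.toRootPairing.RootForm (normMap ρ β) β' := by
      intro γ
      have h1 := rootForm_invariant Ψ ρ ρ' hact γ (normMap ρ β) β'
      rwa [norm_comp_left] at h1
    have hcard : Ψ.toRootPairing.RootForm (normMap ρ β) (normMap ρ β) =
        (Fintype.card Γ : ℤ) * Ψ.toRootPairing.RootForm (normMap ρ β) β' := by
      calc Ψ.toRootPairing.RootForm (normMap ρ β) (normMap ρ β)
          = Ψ.toRootPairing.RootForm (normMap ρ β) (normMap ρ β') := by rw [hN]
        _ = ∑ γ : Γ, Ψ.toRootPairing.RootForm (normMap ρ β) (ρ γ β') := by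
            rw [norm_apply ρ β', map_sum]
        _ = (Fintype.card Γ : ℤ) * Ψ.toRootPairing.RootForm (normMap ρ β) β' := by
            rw [Finset.sum_congr rfl (fun γ _ => hterm γ), Finset.sum_const,
              Finset.card_univ, nsmul_eq_mul]
    have hpos2 : 0 < Ψ.toRootPairing.RootForm (normMap ρ β) β' := by
      rw [hcard] at hpos
      by_contra hle
      push_neg at hle
      have : (0:ℤ) ≤ Fintype.card Γ := by positivity
      nlinarith
    have hsplit : Ψ.toRootPairing.RootForm (normMap ρ β) β' =
        ∑ γ : Γ, Ψ.toRootPairing.RootForm (ρ γ β) β' := by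
      rw [norm_apply, map_sum, LinearMap.coe_sum, Finset.sum_apply]
    obtain ⟨γ, -, hγ⟩ : ∃ γ ∈ Finset.univ, 0 < Ψ.toRootPairing.RootForm (ρ γ β) β' := by
      by_contra hall
      push_neg at hall
      have : Ψ.toRootPairing.RootForm (normMap ρ β) β' ≤ 0 := by
        rw [hsplit]
        exact Finset.sum_nonpos fun γ hγ => hall γ hγ
      omega
    rcases Ψ.sub_mem_or_eq (hact.root_mem γ β hβ) hβ'r hγ with heq | hmem
    · exact ⟨γ, heq⟩
    · exfalso
      have hz : normMap ρ (β' - ρ γ β) = 0 := by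
        rw [map_sub, norm_comp_right, hN, sub_self]
      exact norm_root_ne_zero Ψ ρ Δ hΔ hstab hmem hz
  · rintro ⟨γ, rfl⟩
    exact ⟨hact.root_mem γ β hβ, (istar_eq_iff ρ _ _).mpr (norm_comp_right ρ γ β)⟩
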